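/- arXiv:1812.07321 — 2 statements merged into one kernel-verified Lean document; each statement's English description precedes it below -/
import Mathlib

section
/- Let (M, φ, ρ) be a Q-graded Long H-dimodule over a Q-graded Hopf quasigroup H. Then for each q ∈ Q the map R_q: M_q⊗M_q → M_q⊗M_q, R_q(m⊗n) = n_{(1)}·m ⊗ n_{(0)}, is a solution of the Long equation R^{12}R^{23} = R^{23}R^{12} on M_q⊗M_q⊗M_q. -/
open TensorProduct

universe u v w

/-- A quasigroup: a set with product, identity `e`, and two-sided inverses satisfying
`p⁻¹(pq) = q` and `(qp)p⁻¹ = q`. -/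
structure QuasigroupStruct (Q : Type u) where
  mul : Q → Q → Q
  one : Q
  inv : Q → Q
  mul_one : ∀ p, mul p one = p
  one_mul : ∀ p, mul one p = p
  inv_mul_cancel : ∀ p q, mul (inv p) (mul p q) = q
  mul_inv_cancel : ∀ p q, mul (mul q p) (inv p) = q

namespace QuasigroupStruct

variable {Q : Type u} (G : QuasigroupStruct Q)

lemma inv_mul_self (p : Q) : G.mul (G.inv p) p = G.one := by
  have h := G.inv_mul_cancel p G.one
  rwa [G.mul_one] at h

lemma mul_inv_self (p : Q) : G.mul p (G.inv p) = G.one := by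
  have h := G.mul_inv_cancel p G.one
  rwa [G.one_mul] at h

lemma inv_inv (p : Q) : G.inv (G.inv p) = p := by
  have h := G.inv_mul_cancel (G.inv p) p
  rw [G.inv_mul_self p] at h
  rwa [G.mul_one] at h

lemma mul_inv_cancel_left (p q : Q) : G.mul p (G.mul (G.inv p) q) = q := by
  have h := G.inv_mul_cancel (G.inv p) q
  rwa [G.inv_inv] at h

lemma inv_mul_cancel_right (p q : Q) : G.mul (G.mul q (G.inv p)) p = q := by
  have h := G.mul_inv_cancel (G.inv p) q
  rwa [G.inv_inv] at h

lemma mul_inv_rev (p q : Q) : G.inv (G.mul p q) = G.mul (G.inv q) (G.inv p) := by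
  have h1 : G.mul q (G.inv (G.mul p q)) = G.inv p := by
    have h := G.mul_inv_cancel (G.mul p q) (G.inv p)
    rwa [G.inv_mul_cancel p q] at h
  calc G.inv (G.mul p q)
      = G.mul (G.inv q) (G.mul q (G.inv (G.mul p q))) := (G.inv_mul_cancel q _).symm
    _ = G.mul (G.inv q) (G.inv p) := by rw [h1]

lemma inv_one : G.inv G.one = G.one := by
  have h := G.inv_mul_cancel G.one G.one
  rwa [G.one_mul, G.mul_one] at h

end QuasigroupStruct

/-- Transport along an equality of grades, as a linear map. -/
def gcl {Q : Type u} {H : Q → Type w} {k : Type v} [CommSemiring k]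
    [∀ p, AddCommMonoid (H p)] [∀ p, Module k (H p)] {p q : Q} (e : p = q) :
    H p →ₗ[k] H q := by subst e; exact LinearMap.id

/-- A `Q`-graded Hopf quasigroup: a family of coassociative counital coalgebras `H p`
with a (not necessarily associative) graded multiplication, unit and antipode family,
such that the multiplications and the unit are coalgebra maps and the antipode
satisfies the Hopf quasigroup axioms. -/
structure GradedHopfQuasigroup (k : Type v) [CommRing k] {Q : Type u} (G : QuasigroupStruct Q)
    (H : Q → Type w) [∀ p, AddCommGroup (H p)] [∀ p, Module k (H p)]
    [∀ p, Coalgebra k (H p)] where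
  mul : ∀ p q, H p →ₗ[k] H q →ₗ[k] H (G.mul p q)
  one : H G.one
  antipode : ∀ p, H p →ₗ[k] H (G.inv p)
  mul_one' : ∀ (p : Q) (h : H p), gcl (k := k) (G.mul_one p) ((mul p G.one h) one) = h
  one_mul' : ∀ (p : Q) (h : H p), gcl (k := k) (G.one_mul p) ((mul G.one p one) h) = h
  comul_mul : ∀ (p q : Q) (h : H p) (g : H q),
    Coalgebra.comul (R := k) ((mul p q h) g) =
      (TensorProduct.map (TensorProduct.lift (mul p q)) (TensorProduct.lift (mul p q)))
        ((TensorProduct.tensorTensorTensorComm k (H p) (H p) (H q) (H q))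
          (Coalgebra.comul h ⊗ₜ[k] Coalgebra.comul g))
  counit_mul : ∀ (p q : Q) (h : H p) (g : H q),
    Coalgebra.counit (R := k) ((mul p q h) g) =
      Coalgebra.counit (R := k) h * Coalgebra.counit (R := k) g
  comul_one : Coalgebra.comul (R := k) one = one ⊗ₜ[k] one
  counit_one : Coalgebra.counit (R := k) one = 1
  /-- `S (h₁) (h₂ g) = ε(h) g` -/
  antipode_mul_left : ∀ (p q : Q) (h : H p) (g : H q),
    TensorProduct.lift
      (((mul (G.inv p) (G.mul p q)).comp (antipode p)).compl₂ ((mul p q).flip g))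
      (Coalgebra.comul h)
      = gcl (k := k) (G.inv_mul_cancel p q).symm (Coalgebra.counit (R := k) h • g)
  /-- `h₁ (S (h₂) g) = ε(h) g` -/
  antipode_mul_left' : ∀ (p q : Q) (h : H p) (g : H q),
    TensorProduct.lift
      ((mul p (G.mul (G.inv p) q)).compl₂ (((mul (G.inv p) q).flip g).comp (antipode p)))
      (Coalgebra.comul h)
      = gcl (k := k) (G.mul_inv_cancel_left p q).symm (Coalgebra.counit (R := k) h • g)
  /-- `(g S (h₁)) h₂ = ε(h) g` -/
  antipode_mul_right : ∀ (p q : Q) (h : H p) (g : H q),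
    TensorProduct.lift
      ((mul (G.mul q (G.inv p)) p).comp ((mul q (G.inv p) g).comp (antipode p)))
      (Coalgebra.comul h)
      = gcl (k := k) (G.inv_mul_cancel_right p q).symm (Coalgebra.counit (R := k) h • g)
  /-- `(g h₁) S (h₂) = ε(h) g` -/
  antipode_mul_right' : ∀ (p q : Q) (h : H p) (g : H q),
    TensorProduct.lift
      (((mul (G.mul q p) (G.inv p)).comp (mul q p g)).compl₂ (antipode p))
      (Coalgebra.comul h)
      = gcl (k := k) (G.mul_inv_cancel p q).symm (Coalgebra.counit (R := k) h • g)

variable {k : Type v} [Field k] {Q : Type u} {G : QuasigroupStruct Q}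
  {H : Q → Type w} [∀ p, AddCommGroup (H p)] [∀ p, Module k (H p)]
  [∀ p, Coalgebra k (H p)]

/-- A `Q`-graded `H`-quasimodule. -/
structure GradedQuasimodule (A : GradedHopfQuasigroup k G H) (M : Q → Type w)
    [∀ q, AddCommGroup (M q)] [∀ q, Module k (M q)] where
  act : ∀ p q, H p →ₗ[k] M q →ₗ[k] M (G.mul p q)
  one_act : ∀ (q : Q) (m : M q), gcl (k := k) (G.one_mul q) ((act G.one q A.one) m) = m
  quasi_left : ∀ (p q : Q) (h : H p) (m : M q),
    TensorProduct.lift ((act p (G.mul (G.inv p) q)).compl₂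
        (((act (G.inv p) q).flip m).comp (A.antipode p))) (Coalgebra.comul h)
      = gcl (k := k) (G.mul_inv_cancel_left p q).symm (Coalgebra.counit (R := k) h • m)
  quasi_left' : ∀ (p q : Q) (h : H p) (m : M q),
    TensorProduct.lift (((act (G.inv p) (G.mul p q)).comp (A.antipode p)).compl₂
        ((act p q).flip m)) (Coalgebra.comul h)
      = gcl (k := k) (G.inv_mul_cancel p q).symm (Coalgebra.counit (R := k) h • m)

/-- A `Q`-graded Long `H`-dimodule: a graded quasimodule together with
coassociative counital right `H_e`-comodule structures compatible with the action. -/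
structure GradedLongDimodule (A : GradedHopfQuasigroup k G H) (M : Q → Type w)
    [∀ q, AddCommGroup (M q)] [∀ q, Module k (M q)]
    extends GradedQuasimodule A M where
  coact : ∀ q, M q →ₗ[k] M q ⊗[k] H G.one
  coact_coassoc : ∀ (q : Q) (m : M q),
    (TensorProduct.assoc k (M q) (H G.one) (H G.one))
        ((LinearMap.rTensor (H G.one) (coact q)) (coact q m))
      = (LinearMap.lTensor (M q) (Coalgebra.comul (R := k))) (coact q m)
  coact_counit : ∀ (q : Q) (m : M q),
    (TensorProduct.rid k (M q))
        ((LinearMap.lTensor (M q) (Coalgebra.counit (R := k))) (coact q m)) = m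
  /-- `ρ(h·m) = h·m₍₀₎ ⊗ m₍₁₎` -/
  coact_act : ∀ (p q : Q) (h : H p) (m : M q),
    coact (G.mul p q) ((act p q h) m)
      = (LinearMap.rTensor (H G.one) ((act p q) h)) (coact q m)

/-- The map `R_q(m ⊗ n) = n₍₁₎ · m ⊗ n₍₀₎`. -/
noncomputable def longR {A : GradedHopfQuasigroup k G H} {M : Q → Type w}
    [∀ q, AddCommGroup (M q)] [∀ q, Module k (M q)]
    (P : GradedLongDimodule A M) (q : Q) :
    M q ⊗[k] M q →ₗ[k] M q ⊗[k] M q :=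
  (TensorProduct.comm k (M q) (M q)).toLinearMap ∘ₗ
    (LinearMap.lTensor (M q)
      ((gcl (k := k) (G.one_mul q)) ∘ₗ
        (TensorProduct.lift (P.act G.one q)) ∘ₗ
          (TensorProduct.comm k (M q) (H G.one)).toLinearMap)) ∘ₗ
      (TensorProduct.leftComm k (M q) (M q) (H G.one)).toLinearMap ∘ₗ
        (LinearMap.lTensor (M q) (P.coact q))


section AuxLong

variable {A : GradedHopfQuasigroup k G H} {M : Q → Type w}
  [∀ q, AddCommGroup (M q)] [∀ q, Module k (M q)]

lemma gcl_rfl {H' : Q → Type w} [∀ p, AddCommMonoid (H' p)] [∀ p, Module k (H' p)] {p : Q} :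
    gcl (k := k) (rfl : p = p) = (LinearMap.id : H' p →ₗ[k] H' p) := rfl

/-- `fAux m h = gcl (h · m)`. -/
noncomputable def fAux (P : GradedLongDimodule A M) (q : Q) (m : M q) : H G.one →ₗ[k] M q :=
  (gcl (k := k) (G.one_mul q)) ∘ₗ ((P.act G.one q).flip m)

/-- `auxL m (a ⊗ b) = gcl (b · m) ⊗ a`. -/
noncomputable def auxL (P : GradedLongDimodule A M) (q : Q) (m : M q) :
    M q ⊗[k] H G.one →ₗ[k] M q ⊗[k] M q :=
  (TensorProduct.comm k (M q) (M q)).toLinearMap ∘ₗ LinearMap.lTensor (M q) (fAux P q m)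

@[simp] lemma auxL_tmul (P : GradedLongDimodule A M) (q : Q) (m a : M q) (b : H G.one) :
    auxL P q m (a ⊗ₜ[k] b) = fAux P q m b ⊗ₜ[k] a := by
  simp [auxL]

lemma fAux_add (P : GradedLongDimodule A M) (q : Q) (m m' : M q) :
    fAux P q (m + m') = fAux P q m + fAux P q m' := by
  unfold fAux; rw [map_add, LinearMap.comp_add]

lemma fAux_smul (P : GradedLongDimodule A M) (q : Q) (c : k) (m : M q) :
    fAux P q (c • m) = c • fAux P q m := by
  unfold fAux; rw [map_smul, LinearMap.comp_smul]

/-- `auxL` as a bilinear map. -/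
noncomputable def auxB (P : GradedLongDimodule A M) (q : Q) :
    M q →ₗ[k] (M q ⊗[k] H G.one) →ₗ[k] M q ⊗[k] M q where
  toFun m := auxL P q m
  map_add' m m' := by
    unfold auxL; rw [fAux_add, LinearMap.lTensor_add, LinearMap.comp_add]
  map_smul' c m := by
    unfold auxL; rw [fAux_smul, LinearMap.lTensor_smul, LinearMap.comp_smul]; rfl

@[simp] lemma auxB_apply (P : GradedLongDimodule A M) (q : Q) (m : M q) :
    auxB P q m = auxL P q m := rfl

lemma coact_gcl (P : GradedLongDimodule A M) {p q' : Q} (e : p = q') (x : M p) :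
    P.coact q' (gcl (k := k) e x) =
      LinearMap.rTensor (H G.one) (gcl (k := k) e) (P.coact p x) := by
  subst e
  simp only [gcl_rfl, LinearMap.rTensor_id, LinearMap.id_apply]

lemma longR_tmul (P : GradedLongDimodule A M) (q : Q) (m n : M q) :
    longR P q (m ⊗ₜ[k] n) = auxL P q m (P.coact q n) := by
  unfold longR
  simp only [LinearMap.coe_comp, Function.comp_apply, LinearEquiv.coe_coe,
    LinearMap.lTensor_tmul]
  generalize P.coact q n = z
  induction z using TensorProduct.induction_on with
  | zero => simp
  | tmul a b =>
      simp [TensorProduct.leftComm_tmul, TensorProduct.comm_tmul, fAux]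
  | add x y hx hy => simp only [TensorProduct.tmul_add, map_add, hx, hy]

/-- Common normal form of both sides of the Long equation. -/
noncomputable def longC (P : GradedLongDimodule A M) (q : Q) (m : M q)
    (w zp : M q ⊗[k] H G.one) : M q ⊗[k] (M q ⊗[k] M q) :=
  TensorProduct.map (fAux P q m) ((auxB P q).flip zp)
    ((TensorProduct.comm k (M q) (H G.one)) w)

lemma longC_add_right (P : GradedLongDimodule A M) (q : Q) (m : M q)
    (w x y : M q ⊗[k] H G.one) :
    longC P q m w (x + y) = longC P q m w x + longC P q m w y := by
  simp only [longC, map_add, TensorProduct.map_add_right, LinearMap.add_apply]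

lemma rhs_eval (P : GradedLongDimodule A M) (q : Q) (m p' : M q)
    (z : M q ⊗[k] H G.one) :
    LinearMap.lTensor (M q) (longR P q)
        ((TensorProduct.assoc k (M q) (M q) (M q)) ((auxL P q m z) ⊗ₜ[k] p'))
      = longC P q m z (P.coact q p') := by
  induction z using TensorProduct.induction_on with
  | zero => simp [longC]
  | tmul a' b' =>
      simp [longC, TensorProduct.assoc_tmul, longR_tmul, TensorProduct.comm_tmul]
  | add x y hx hy =>
      simp only [longC, map_add, TensorProduct.add_tmul] at hx hy ⊢
      rw [hx, hy]

lemma lhs_eval (P : GradedLongDimodule A M) (q : Q) (m n : M q)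
    (zp : M q ⊗[k] H G.one) :
    (TensorProduct.assoc k (M q) (M q) (M q))
        (LinearMap.rTensor (M q) (longR P q)
          ((TensorProduct.assoc k (M q) (M q) (M q)).symm
            (m ⊗ₜ[k] (auxL P q n zp))))
      = longC P q m (P.coact q n) zp := by
  induction zp using TensorProduct.induction_on with
  | zero => simp [longC]
  | tmul a b =>
      rw [auxL_tmul]
      have hf : fAux P q n b = gcl (k := k) (G.one_mul q) ((P.act G.one q) b n) := rfl
      rw [TensorProduct.assoc_symm_tmul, LinearMap.rTensor_tmul, longR_tmul,
        hf, coact_gcl, P.coact_act]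
      generalize P.coact q n = w
      induction w using TensorProduct.induction_on with
      | zero => simp [longC]
      | tmul a' b' =>
          simp [longC, TensorProduct.comm_tmul, TensorProduct.assoc_tmul, fAux]
      | add x y hx hy =>
          simp only [longC, map_add, TensorProduct.add_tmul] at hx hy ⊢
          rw [hx, hy]
  | add x y hx hy =>
      rw [longC_add_right, ← hx, ← hy]
      simp only [map_add, TensorProduct.tmul_add]

end AuxLong

/-- `R_q` solves the Long equation `R¹²R²³ = R²³R¹²` on `M_q ⊗ M_q ⊗ M_q`. -/
theorem gradedLongDimodule_long_equation {A : GradedHopfQuasigroup k G H}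
    {M : Q → Type w} [∀ q, AddCommGroup (M q)] [∀ q, Module k (M q)]
    (P : GradedLongDimodule A M) (q : Q) :
    (((TensorProduct.assoc k (M q) (M q) (M q)).toLinearMap ∘ₗ
        (LinearMap.rTensor (M q) (longR P q)) ∘ₗ
          (TensorProduct.assoc k (M q) (M q) (M q)).symm.toLinearMap) ∘ₗ
      LinearMap.lTensor (M q) (longR P q))
    = (LinearMap.lTensor (M q) (longR P q)) ∘ₗ
        ((TensorProduct.assoc k (M q) (M q) (M q)).toLinearMap ∘ₗ
          (LinearMap.rTensor (M q) (longR P q)) ∘ₗ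
            (TensorProduct.assoc k (M q) (M q) (M q)).symm.toLinearMap) := by
  apply LinearMap.ext
  intro x
  induction x using TensorProduct.induction_on with
  | zero => simp
  | add u v hu hv => simp only [map_add, hu, hv]
  | tmul m y =>
      induction y using TensorProduct.induction_on with
      | zero => simp
      | add u v hu hv => simp only [TensorProduct.tmul_add, map_add, hu, hv]
      | tmul n p =>
          simp only [LinearMap.coe_comp, Function.comp_apply, LinearEquiv.coe_coe,
            LinearMap.lTensor_tmul, TensorProduct.assoc_symm_tmul, LinearMap.rTensor_tmul]
          rw [longR_tmul P q n p, longR_tmul P q m n, lhs_eval, rhs_eval]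
end

section
/- Let H be a Q-graded Hopf quasigroup and A an H-quasimodule Hopf quasigroup. Then the action commutes with the antipode of A: h·S(a) = S(h·a) for all p ∈ Q, h ∈ H_p, a ∈ A. -/
open TensorProduct

universe u v w

variable {k : Type v} [Field k]

/-- A Hopf quasigroup: a unital, not necessarily associative algebra which is a
coassociative counital coalgebra with multiplicative comultiplication and counit,
together with an antipode satisfying the Hopf quasigroup identities. -/
structure HopfQuasigroupStr (k : Type v) [Field k] (A : Type w)
    [AddCommGroup A] [Module k A] [Coalgebra k A] where
  mul : A →ₗ[k] A →ₗ[k] A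
  one : A
  antipode : A →ₗ[k] A
  mul_one' : ∀ a, mul a one = a
  one_mul' : ∀ a, mul one a = a
  comul_mul : ∀ a b, Coalgebra.comul (R := k) ((mul a) b)
    = (TensorProduct.map (TensorProduct.lift mul) (TensorProduct.lift mul))
        ((TensorProduct.tensorTensorTensorComm k A A A A)
          (Coalgebra.comul a ⊗ₜ[k] Coalgebra.comul b))
  counit_mul : ∀ a b, Coalgebra.counit (R := k) ((mul a) b)
    = Coalgebra.counit (R := k) a * Coalgebra.counit (R := k) b
  comul_one : Coalgebra.comul (R := k) one = one ⊗ₜ[k] one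
  counit_one : Coalgebra.counit (R := k) one = 1
  /-- `S(a₁)(a₂ b) = ε(a) b` -/
  antipode_ax1 : ∀ a b, TensorProduct.lift ((mul.comp antipode).compl₂ (mul.flip b))
    (Coalgebra.comul a) = Coalgebra.counit (R := k) a • b
  /-- `a₁(S(a₂) b) = ε(a) b` -/
  antipode_ax2 : ∀ a b, TensorProduct.lift (mul.compl₂ ((mul.flip b).comp antipode))
    (Coalgebra.comul a) = Coalgebra.counit (R := k) a • b
  /-- `(b S(a₁)) a₂ = ε(a) b` -/
  antipode_ax3 : ∀ a b, TensorProduct.lift (mul.comp ((mul b).comp antipode))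
    (Coalgebra.comul a) = Coalgebra.counit (R := k) a • b
  /-- `(b a₁) S(a₂) = ε(a) b` -/
  antipode_ax4 : ∀ a b, TensorProduct.lift ((mul.comp (mul b)).compl₂ antipode)
    (Coalgebra.comul a) = Coalgebra.counit (R := k) a • b

variable {Q : Type u} {G : QuasigroupStruct Q}
  {H : Q → Type w} [∀ p, AddCommGroup (H p)] [∀ p, Module k (H p)]
  [∀ p, Coalgebra k (H p)]

/-- An `H`-quasimodule Hopf quasigroup: a Hopf quasigroup `A` which is an
`H`-quasimodule such that `A` is both an `H`-quasimodule algebra and an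
`H`-quasimodule coalgebra. -/
structure QuasimoduleHopfQuasigroup (Hh : GradedHopfQuasigroup k G H)
    (A : Type w) [AddCommGroup A] [Module k A] [Coalgebra k A]
    extends HopfQuasigroupStr k A where
  act : ∀ p, H p →ₗ[k] A →ₗ[k] A
  one_act : ∀ a : A, (act G.one Hh.one) a = a
  /-- `h₁ · (S_p(h₂) · a) = ε_p(h) a` -/
  quasi_left : ∀ (p : Q) (h : H p) (a : A),
    TensorProduct.lift ((act p).compl₂
        (((act (G.inv p)).flip a).comp (Hh.antipode p))) (Coalgebra.comul h)
      = Coalgebra.counit (R := k) h • a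
  /-- `S_p(h₁) · (h₂ · a) = ε_p(h) a` -/
  quasi_left' : ∀ (p : Q) (h : H p) (a : A),
    TensorProduct.lift (((act (G.inv p)).comp (Hh.antipode p)).compl₂
        ((act p).flip a)) (Coalgebra.comul h)
      = Coalgebra.counit (R := k) h • a
  /-- `h · (ab) = (h₁·a)(h₂·b)` -/
  act_mul : ∀ (p : Q) (h : H p) (a b : A),
    (act p h) ((mul a) b)
      = TensorProduct.lift (mul.compl₁₂ ((act p).flip a) ((act p).flip b))
          (Coalgebra.comul h)
  act_one : ∀ (p : Q) (h : H p), (act p h) one = Coalgebra.counit (R := k) h • one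
  comul_act : ∀ (p : Q) (h : H p) (a : A),
    Coalgebra.comul (R := k) ((act p h) a)
      = (TensorProduct.map (TensorProduct.lift (act p)) (TensorProduct.lift (act p)))
          ((TensorProduct.tensorTensorTensorComm k (H p) (H p) A A)
            (Coalgebra.comul h ⊗ₜ[k] Coalgebra.comul a))
  counit_act : ∀ (p : Q) (h : H p) (a : A),
    Coalgebra.counit (R := k) ((act p h) a)
      = Coalgebra.counit (R := k) h * Coalgebra.counit (R := k) a

section Helpers

variable {R : Type*} [CommSemiring R]

/-- `x ⊗ (y ⊗ z) ↦ x(yz)` for a bilinear multiplication. -/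
noncomputable def mul3 {A : Type*} [AddCommMonoid A] [Module R A]
    (m : A →ₗ[R] A →ₗ[R] A) : A ⊗[R] (A ⊗[R] A) →ₗ[R] A :=
  TensorProduct.lift (((LinearMap.llcomp R (A ⊗[R] A) A A).flip (TensorProduct.lift m)).comp m)

@[simp] lemma mul3_tmul {A : Type*} [AddCommMonoid A] [Module R A]
    (m : A →ₗ[R] A →ₗ[R] A) (x y z : A) :
    mul3 m (x ⊗ₜ[R] (y ⊗ₜ[R] z)) = m x (m y z) := by
  simp [mul3]

lemma sum3_rotate {ι₁ ι₂ : Type*} {κ : ι₁ → Type*} {M : Type*} [AddCommMonoid M]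
    (s₁ : Finset ι₁) (t : ∀ i, Finset (κ i)) (s₂ : Finset ι₂)
    (f : (i : ι₁) → κ i → ι₂ → M) :
    ∑ i ∈ s₁, ∑ n ∈ t i, ∑ m ∈ s₂, f i n m
      = ∑ m ∈ s₂, ∑ i ∈ s₁, ∑ n ∈ t i, f i n m :=
  calc ∑ i ∈ s₁, ∑ n ∈ t i, ∑ m ∈ s₂, f i n m
      = ∑ i ∈ s₁, ∑ m ∈ s₂, ∑ n ∈ t i, f i n m :=
        Finset.sum_congr rfl fun i _ => Finset.sum_comm
    _ = ∑ m ∈ s₂, ∑ i ∈ s₁, ∑ n ∈ t i, f i n m := Finset.sum_comm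

end Helpers

/-- The action commutes with the antipode of `A`: `h · S(a) = S(h · a)`. -/
theorem quasimoduleHopfQuasigroup_act_antipode {Hh : GradedHopfQuasigroup k G H}
    {A : Type w} [AddCommGroup A] [Module k A] [Coalgebra k A]
    (P : QuasimoduleHopfQuasigroup Hh A) (p : Q) (h : H p) (a : A) :
    (P.act p h) (P.antipode a) = P.antipode ((P.act p h) a) := by
  classical
  have rh : Coalgebra.Repr k h (H p × H p) := Coalgebra.Repr.arbitrary k h
  have rh1 : ∀ i, Coalgebra.Repr k (rh.left i) (H p × H p) := fun i => Coalgebra.Repr.arbitrary k _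
  have rh2 : ∀ i, Coalgebra.Repr k (rh.right i) (H p × H p) := fun i => Coalgebra.Repr.arbitrary k _
  have ra : Coalgebra.Repr k a (A × A) := Coalgebra.Repr.arbitrary k a
  have ra1 : ∀ j, Coalgebra.Repr k (ra.left j) (A × A) := fun j => Coalgebra.Repr.arbitrary k _
  have ra2 : ∀ j, Coalgebra.Repr k (ra.right j) (A × A) := fun j => Coalgebra.Repr.arbitrary k _
  -- counit identities
  have hch : ∑ i ∈ rh.index, Coalgebra.counit (R := k) (rh.left i) • rh.right i = h := by
    have e := congrArg (TensorProduct.lid k (H p)) (Coalgebra.sum_counit_tmul_eq rh)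
    simp only [map_sum, TensorProduct.lid_tmul, one_smul] at e
    exact e
  have hch' : ∑ i ∈ rh.index, Coalgebra.counit (R := k) (rh.right i) • rh.left i = h := by
    have e := congrArg (TensorProduct.rid k (H p)) (Coalgebra.sum_tmul_counit_eq rh)
    simp only [map_sum, TensorProduct.rid_tmul, one_smul] at e
    exact e
  have hca : ∑ j ∈ ra.index, Coalgebra.counit (R := k) (ra.left j) • ra.right j = a := by
    have e := congrArg (TensorProduct.lid k A) (Coalgebra.sum_counit_tmul_eq ra)
    simp only [map_sum, TensorProduct.lid_tmul, one_smul] at e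
    exact e
  have hca' : ∑ j ∈ ra.index, Coalgebra.counit (R := k) (ra.right j) • ra.left j = a := by
    have e := congrArg (TensorProduct.rid k A) (Coalgebra.sum_tmul_counit_eq ra)
    simp only [map_sum, TensorProduct.rid_tmul, one_smul] at e
    exact e
  -- step 1 : expand both arguments by counitality
  have step1 : (P.act p h) (P.antipode a)
      = ∑ i ∈ rh.index, ∑ j ∈ ra.index,
          (Coalgebra.counit (R := k) (rh.left i) * Coalgebra.counit (R := k) (ra.left j)) •
            (P.act p (rh.right i)) (P.antipode (ra.right j)) := by
    conv_lhs => rw [← hch, ← hca]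
    simp [map_sum, LinearMap.sum_apply, LinearMap.smul_apply, map_smul, Finset.smul_sum,
      smul_smul]
    rw [Finset.sum_comm]
    exact Finset.sum_congr rfl fun _ _ => Finset.sum_congr rfl fun _ _ => by rw [mul_comm]
  -- step 2 : use antipode axiom 1 of `A` on the element `h₁ · a₁`
  have step2 : ∀ i ∈ rh.index, ∀ j ∈ ra.index,
      (Coalgebra.counit (R := k) (rh.left i) * Coalgebra.counit (R := k) (ra.left j)) •
          (P.act p (rh.right i)) (P.antipode (ra.right j))
        = ∑ n ∈ (rh1 i).index, ∑ m ∈ (ra1 j).index,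
            P.mul (P.antipode ((P.act p ((rh1 i).left n)) ((ra1 j).left m)))
              (P.mul ((P.act p ((rh1 i).right n)) ((ra1 j).right m))
                ((P.act p (rh.right i)) (P.antipode (ra.right j)))) := by
    intro i _ j _
    have hax := P.antipode_ax1 ((P.act p (rh.left i)) (ra.left j))
        ((P.act p (rh.right i)) (P.antipode (ra.right j)))
    rw [P.comul_act, P.counit_act, ← (rh1 i).eq, ← (ra1 j).eq] at hax
    simp only [TensorProduct.sum_tmul, TensorProduct.tmul_sum, map_sum,
      TensorProduct.tensorTensorTensorComm_tmul, TensorProduct.map_tmul,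
      TensorProduct.lift.tmul, LinearMap.compl₂_apply, LinearMap.comp_apply,
      LinearMap.flip_apply] at hax
    exact hax.symm.trans Finset.sum_comm
  -- coassociativity swaps
  have swapH : ∀ (F G H' : H p →ₗ[k] A),
      (∑ i ∈ rh.index, ∑ n ∈ (rh1 i).index,
          P.mul (F ((rh1 i).left n)) (P.mul (G ((rh1 i).right n)) (H' (rh.right i))))
        = ∑ i ∈ rh.index, ∑ n ∈ (rh2 i).index,
          P.mul (F (rh.left i)) (P.mul (G ((rh2 i).left n)) (H' ((rh2 i).right n))) := by
    intro F G H'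
    have base := Coalgebra.sum_map_tmul_tmul_eq (R := k) F G H' h
      (repr := rh) (a₁ := rh1) (a₂ := rh2)
    simpa [map_sum] using (congrArg (mul3 P.mul) base).symm
  have swapA : ∀ (F G H' : A →ₗ[k] A),
      (∑ j ∈ ra.index, ∑ m ∈ (ra1 j).index,
          P.mul (F ((ra1 j).left m)) (P.mul (G ((ra1 j).right m)) (H' (ra.right j))))
        = ∑ j ∈ ra.index, ∑ m ∈ (ra2 j).index,
          P.mul (F (ra.left j)) (P.mul (G ((ra2 j).left m)) (H' ((ra2 j).right m))) := by
    intro F G H'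
    have base := Coalgebra.sum_map_tmul_tmul_eq (R := k) F G H' a
      (repr := ra) (a₁ := ra1) (a₂ := ra2)
    simpa [map_sum] using (congrArg (mul3 P.mul) base).symm
  -- `act_mul` in Sweedler form
  have actmul : ∀ (i : H p × H p) (v w : A),
      (P.act p (rh.right i)) (P.mul v w)
        = ∑ n ∈ (rh2 i).index,
            P.mul ((P.act p ((rh2 i).left n)) v) ((P.act p ((rh2 i).right n)) w) := by
    intro i v w
    rw [P.act_mul, ← (rh2 i).eq, map_sum]
    simp [TensorProduct.lift.tmul, LinearMap.compl₁₂_apply, LinearMap.flip_apply]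
  -- `a₁ S(a₂) = ε(a) 1` in Sweedler form, for the right legs of `a`
  have sumanti : ∀ (j : ra.ι),
      (∑ m ∈ (ra2 j).index, P.mul ((ra2 j).left m) (P.antipode ((ra2 j).right m)))
        = Coalgebra.counit (R := k) (ra.right j) • P.one := by
    intro j
    have h4 := P.antipode_ax4 (ra.right j) P.one
    rw [← (ra2 j).eq, map_sum] at h4
    simpa [TensorProduct.lift.tmul, LinearMap.compl₂_apply, LinearMap.comp_apply,
      P.one_mul'] using h4
  -- final expansion of the right-hand side
  have stepZ : P.antipode ((P.act p h) a)
      = ∑ i ∈ rh.index, ∑ j ∈ ra.index,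
          (Coalgebra.counit (R := k) (rh.right i) * Coalgebra.counit (R := k) (ra.right j)) •
            P.antipode ((P.act p (rh.left i)) (ra.left j)) := by
    conv_lhs => rw [← hch', ← hca']
    simp [map_sum, LinearMap.sum_apply, LinearMap.smul_apply, map_smul, Finset.smul_sum,
      smul_smul]
    rw [Finset.sum_comm]
    exact Finset.sum_congr rfl fun _ _ => Finset.sum_congr rfl fun _ _ => by rw [mul_comm]
  calc (P.act p h) (P.antipode a)
      = ∑ i ∈ rh.index, ∑ j ∈ ra.index,
          (Coalgebra.counit (R := k) (rh.left i) * Coalgebra.counit (R := k) (ra.left j)) •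
            (P.act p (rh.right i)) (P.antipode (ra.right j)) := step1
    _ = ∑ i ∈ rh.index, ∑ j ∈ ra.index, ∑ n ∈ (rh1 i).index, ∑ m ∈ (ra1 j).index,
            P.mul (P.antipode ((P.act p ((rh1 i).left n)) ((ra1 j).left m)))
              (P.mul ((P.act p ((rh1 i).right n)) ((ra1 j).right m))
                ((P.act p (rh.right i)) (P.antipode (ra.right j)))) :=
        Finset.sum_congr rfl fun i hi => Finset.sum_congr rfl fun j hj => step2 i hi j hj
    _ = ∑ j ∈ ra.index, ∑ m ∈ (ra1 j).index, ∑ i ∈ rh.index, ∑ n ∈ (rh1 i).index,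
            P.mul (P.antipode ((P.act p ((rh1 i).left n)) ((ra1 j).left m)))
              (P.mul ((P.act p ((rh1 i).right n)) ((ra1 j).right m))
                ((P.act p (rh.right i)) (P.antipode (ra.right j)))) := by
        rw [Finset.sum_comm]
        exact Finset.sum_congr rfl fun j _ => sum3_rotate _ _ _ _
    _ = ∑ j ∈ ra.index, ∑ m ∈ (ra1 j).index, ∑ i ∈ rh.index, ∑ n ∈ (rh2 i).index,
            P.mul (P.antipode ((P.act p (rh.left i)) ((ra1 j).left m)))
              (P.mul ((P.act p ((rh2 i).left n)) ((ra1 j).right m))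
                ((P.act p ((rh2 i).right n)) (P.antipode (ra.right j)))) := by
        refine Finset.sum_congr rfl fun j _ => Finset.sum_congr rfl fun m _ => ?_
        simpa using swapH (P.antipode ∘ₗ (P.act p).flip ((ra1 j).left m))
          ((P.act p).flip ((ra1 j).right m)) ((P.act p).flip (P.antipode (ra.right j)))
    _ = ∑ i ∈ rh.index, ∑ n ∈ (rh2 i).index, ∑ j ∈ ra.index, ∑ m ∈ (ra1 j).index,
            P.mul (P.antipode ((P.act p (rh.left i)) ((ra1 j).left m)))
              (P.mul ((P.act p ((rh2 i).left n)) ((ra1 j).right m))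
                ((P.act p ((rh2 i).right n)) (P.antipode (ra.right j)))) := by
        refine (Finset.sum_congr rfl fun j _ => (sum3_rotate _ _ _ _).symm).trans ?_
        rw [Finset.sum_comm]
        exact Finset.sum_congr rfl fun i _ => Finset.sum_comm
    _ = ∑ i ∈ rh.index, ∑ n ∈ (rh2 i).index, ∑ j ∈ ra.index, ∑ m ∈ (ra2 j).index,
            P.mul (P.antipode ((P.act p (rh.left i)) (ra.left j)))
              (P.mul ((P.act p ((rh2 i).left n)) ((ra2 j).left m))
                ((P.act p ((rh2 i).right n)) (P.antipode ((ra2 j).right m)))) := by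
        refine Finset.sum_congr rfl fun i _ => Finset.sum_congr rfl fun n _ => ?_
        simpa using swapA (P.antipode ∘ₗ (P.act p (rh.left i)))
          (P.act p ((rh2 i).left n)) ((P.act p ((rh2 i).right n)) ∘ₗ P.antipode)
    _ = ∑ i ∈ rh.index, ∑ j ∈ ra.index, ∑ m ∈ (ra2 j).index, ∑ n ∈ (rh2 i).index,
            P.mul (P.antipode ((P.act p (rh.left i)) (ra.left j)))
              (P.mul ((P.act p ((rh2 i).left n)) ((ra2 j).left m))
                ((P.act p ((rh2 i).right n)) (P.antipode ((ra2 j).right m)))) :=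
        Finset.sum_congr rfl fun i _ => (sum3_rotate _ _ _ _).symm
    _ = ∑ i ∈ rh.index, ∑ j ∈ ra.index,
          (Coalgebra.counit (R := k) (rh.right i) * Coalgebra.counit (R := k) (ra.right j)) •
            P.antipode ((P.act p (rh.left i)) (ra.left j)) := by
        refine Finset.sum_congr rfl fun i _ => Finset.sum_congr rfl fun j _ => ?_
        calc ∑ m ∈ (ra2 j).index, ∑ n ∈ (rh2 i).index,
              P.mul (P.antipode ((P.act p (rh.left i)) (ra.left j)))
                (P.mul ((P.act p ((rh2 i).left n)) ((ra2 j).left m))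
                  ((P.act p ((rh2 i).right n)) (P.antipode ((ra2 j).right m))))
            = ∑ m ∈ (ra2 j).index,
                P.mul (P.antipode ((P.act p (rh.left i)) (ra.left j)))
                  ((P.act p (rh.right i))
                    (P.mul ((ra2 j).left m) (P.antipode ((ra2 j).right m)))) := by
              refine Finset.sum_congr rfl fun m _ => ?_
              rw [actmul i ((ra2 j).left m) (P.antipode ((ra2 j).right m)), map_sum]
          _ = P.mul (P.antipode ((P.act p (rh.left i)) (ra.left j)))
                ((P.act p (rh.right i))
                  (∑ m ∈ (ra2 j).index,
                    P.mul ((ra2 j).left m) (P.antipode ((ra2 j).right m)))) := by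
              rw [map_sum, map_sum]
          _ = (Coalgebra.counit (R := k) (rh.right i) *
                Coalgebra.counit (R := k) (ra.right j)) •
                P.antipode ((P.act p (rh.left i)) (ra.left j)) := by
              rw [sumanti j, map_smul, P.act_one]
              simp [P.mul_one', smul_smul, mul_comm]
    _ = P.antipode ((P.act p h) a) := stepZ.symm
end
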